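/- Let A be a commutative unital complex Banach algebra and let φ : Aˣ → ℂ ∖ {0} be a multiplicative character of its unit group that is holomorphic on the open set of invertible elements, of order n (i.e. φ(c·1) = c^n for all c ∈ ℂ ∖ {0}). Then for every a ∈ A one has φ(exp a) = exp((Dφ(1))(a)), where Dφ(1) denotes the Fréchet derivative of φ at the identity 1 ∈ Aˣ (a continuous complex-linear functional on A); moreover (Dφ(1))(c·1) = n·c for every c ∈ ℂ. -/

import Mathlib

/-- Let `A` be a commutative unital complex Banach algebra and `φ : A → ℂ` a
function that is holomorphic on the open set of invertible elements, nonzero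
on invertible elements, restricting to a multiplicative character of the unit
group, of order `n` (i.e. `φ (c • 1) = c ^ n` for all nonzero `c`).  Then
`φ (exp a) = exp ((Dφ(1)) a)` for every `a : A`, where `Dφ(1)` is the Fréchet
derivative of `φ` at `1`; moreover `(Dφ(1)) (c • 1) = n * c` for every
`c : ℂ`. -/
theorem multiplicative_character_comp_exp_eq_exp_fderiv
    {A : Type*} [NormedCommRing A] [NormedAlgebra ℂ A] [CompleteSpace A]
    (φ : A → ℂ) (n : ℤ)
    (hne : ∀ x : A, IsUnit x → φ x ≠ 0)
    (hdiff : ∀ x : A, IsUnit x → DifferentiableAt ℂ φ x)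
    (hmul : ∀ x y : A, IsUnit x → IsUnit y → φ (x * y) = φ x * φ y)
    (hord : ∀ c : ℂ, c ≠ 0 → φ (c • (1 : A)) = c ^ n) :
    (∀ a : A, φ (NormedSpace.exp a) = Complex.exp (fderiv ℂ φ 1 a)) ∧
    (∀ c : ℂ, fderiv ℂ φ 1 (c • (1 : A)) = n * c) := by
  set L := fderiv ℂ φ 1 with hLdef
  have h1 : IsUnit (1 : A) := isUnit_one
  -- φ 1 = 1
  have hφ1 : φ 1 = 1 := by
    have h := hmul 1 1 h1 h1
    rw [mul_one] at h
    have := hne 1 h1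
    field_simp at h
    tauto
  -- key derivative identity: fderiv φ x (x * v) = φ x * L v for units x
  have key : ∀ x : A, IsUnit x → ∀ v : A, fderiv ℂ φ x (x * v) = φ x * L v := by
    intro x hx v
    have hx1 : ∀ y : A, IsUnit y → φ (x * y) = φ x * φ y := fun y hy => hmul x y hx hy
    have hev : (fun y => φ (x * y)) =ᶠ[nhds (1 : A)] fun y => φ x * φ y := by
      filter_upwards [Units.isOpen.mem_nhds h1] with y hy using hx1 y hy
    have hlin : HasFDerivAt (fun y : A => x * y) (ContinuousLinearMap.mul ℂ A x) 1 :=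
      (ContinuousLinearMap.mul ℂ A x).hasFDerivAt
    have hcomp : HasFDerivAt (fun y => φ (x * y))
        ((fderiv ℂ φ x).comp (ContinuousLinearMap.mul ℂ A x)) 1 := by
      have hd : HasFDerivAt φ (fderiv ℂ φ x) ((fun y : A => x * y) 1) := by
        simpa using (hdiff x hx).hasFDerivAt
      exact hd.comp (1 : A) hlin
    have hrhs : HasFDerivAt (fun y => φ x * φ y) (φ x • L) 1 :=
      (hdiff 1 h1).hasFDerivAt.const_mul (φ x)
    have hlhs : HasFDerivAt (fun y => φ (x * y)) (φ x • L) 1 :=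
      hrhs.congr_of_eventuallyEq hev
    have := hcomp.unique hlhs
    have happ := congrArg (fun (T : A →L[ℂ] ℂ) => T v) this
    simpa using happ
  -- φ (exp (t • a)) = exp (t * L a)
  have key2 : ∀ (a : A) (t : ℂ),
      φ (NormedSpace.exp (t • a)) = Complex.exp (t * L a) := by
    intro a
    have hf : ∀ t : ℂ, HasDerivAt (fun t : ℂ => φ (NormedSpace.exp (t • a)))
        (φ (NormedSpace.exp (t • a)) * L a) t := by
      intro t
      have hg := hasDerivAt_exp_smul_const (𝕂 := ℂ) a t
      have hu : IsUnit (NormedSpace.exp (t • a)) := by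
        let +nondep : NormedAlgebra ℚ A := .restrictScalars ℚ ℂ A
        exact NormedSpace.isUnit_exp _
      have hc := (hdiff _ hu).hasFDerivAt.comp_hasDerivAt t hg
      simpa [Function.comp_def, key _ hu a] using hc
    have hF : ∀ t : ℂ, HasDerivAt
        (fun t : ℂ => φ (NormedSpace.exp (t • a)) * Complex.exp (-(t * L a))) 0 t := by
      intro t
      have h2 : HasDerivAt (fun t : ℂ => Complex.exp (-(t * L a)))
          (Complex.exp (-(t * L a)) * -(1 * L a)) t :=
        (((hasDerivAt_id t).mul_const (L a)).neg).cexp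
      have : HasDerivAt (fun t : ℂ => φ (NormedSpace.exp (t • a)) * Complex.exp (-(t * L a)))
          (φ (NormedSpace.exp (t • a)) * L a * Complex.exp (-(t * L a)) +
            φ (NormedSpace.exp (t • a)) * (Complex.exp (-(t * L a)) * -(1 * L a))) t :=
        (hf t).mul h2
      convert this using 1
      ring
    have hconst : ∀ t : ℂ,
        φ (NormedSpace.exp (t • a)) * Complex.exp (-(t * L a))
          = φ (NormedSpace.exp ((0 : ℂ) • a)) * Complex.exp (-((0 : ℂ) * L a)) :=
      fun t => is_const_of_deriv_eq_zero (fun s => (hF s).differentiableAt)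
        (fun s => (hF s).deriv) t 0
    intro t
    have h := hconst t
    rw [zero_smul, NormedSpace.exp_zero, hφ1, zero_mul, neg_zero, Complex.exp_zero,
      one_mul, Complex.exp_neg] at h
    field_simp at h
    exact h
  have part1 : ∀ a : A, φ (NormedSpace.exp a) = Complex.exp (L a) := by
    intro a
    simpa using key2 a 1
  refine ⟨part1, ?_⟩
  -- compute L 1
  have hL1 : L (1 : A) = (n : ℂ) := by
    have hexp1 : ∀ t : ℂ, NormedSpace.exp (t • (1 : A)) = Complex.exp t • (1 : A) := by
      intro t
      let +nondep : NormedAlgebra ℚ A := .restrictScalars ℚ ℂ A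
      rw [← Algebra.algebraMap_eq_smul_one, ← Algebra.algebraMap_eq_smul_one,
        Complex.exp_eq_exp_ℂ,
        ← NormedSpace.map_exp (algebraMap ℂ A) (continuous_algebraMap ℂ A)]
    have heq : ∀ t : ℂ, Complex.exp (t * L 1) = Complex.exp ((n : ℂ) * t) := by
      intro t
      rw [← key2 1 t, hexp1 t, hord _ (Complex.exp_ne_zero t), ← Complex.exp_int_mul]
    have hone : ∀ t : ℂ, Complex.exp (t * (L 1 - (n : ℂ))) = 1 := by
      intro t
      rw [mul_sub, Complex.exp_sub, heq t, mul_comm t]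
      field_simp
    by_contra hne'
    have hd : L 1 - (n : ℂ) ≠ 0 := sub_ne_zero.mpr hne'
    have := hone ((Real.pi * Complex.I) / (L 1 - (n : ℂ)))
    rw [div_mul_cancel₀ _ hd, Complex.exp_pi_mul_I] at this
    norm_num at this
  intro c
  have := (fderiv ℂ φ 1).map_smul c (1 : A)
  rw [← hLdef] at this
  rw [this, hL1, smul_eq_mul, mul_comm]
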